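/- In the two-ISP game with side payment p_d ≥ 0 (ISP_1 pays p_d per unit demand to the CP for the signal), the unique equilibrium prices are p_1(θ) = D(θ)/(2α) + β E[D(θ)]/(2α(2α - β)) + 2α² p_d/(4α² - β²) and p_2 = E[D(θ)]/(2α - β) + αβ p_d/(4α² - β²). -/

import Mathlib

/-- Two-ISP game with side payment p_d ≥ 0: ISP₁ observes θ and maximizes
(D(θ) - α·p₁(θ) + β·p₂)(p₁(θ) - p_d) pointwise; ISP₂ maximizes
E[(D(θ) - α·p₂ + β·p₁(θ))]·p₂. The unique equilibrium prices are
p₁(θ) = D(θ)/(2α) + βE[D]/(2α(2α-β)) + 2α²p_d/(4α²-β²) and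
p₂ = E[D]/(2α-β) + αβp_d/(4α²-β²). -/
theorem stmt7 {Θ : Type*} [Fintype Θ] (P D : Θ → ℝ)
    (hP : ∀ θ, 0 ≤ P θ) (hPsum : ∑ θ, P θ = 1) (hD : ∀ θ, 0 ≤ D θ)
    (α β pd : ℝ) (hβ : 0 < β) (hαβ : β < α) (hpd : 0 ≤ pd)
    (p₁ : Θ → ℝ) (p₂ : ℝ) (hp₁ : ∀ θ, 0 ≤ p₁ θ) (hp₂ : 0 ≤ p₂) :
    ((∀ θ, ∀ q, 0 ≤ q → (D θ - α * q + β * p₂) * (q - pd) ≤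
        (D θ - α * p₁ θ + β * p₂) * (p₁ θ - pd)) ∧
     (∀ q, 0 ≤ q → (∑ θ, P θ * (D θ - α * q + β * p₁ θ)) * q ≤
        (∑ θ, P θ * (D θ - α * p₂ + β * p₁ θ)) * p₂)) ↔
    ((∀ θ, p₁ θ = D θ / (2 * α) +
        β * (∑ θ', P θ' * D θ') / (2 * α * (2 * α - β)) +
        2 * α ^ 2 * pd / (4 * α ^ 2 - β ^ 2)) ∧
      p₂ = (∑ θ', P θ' * D θ') / (2 * α - β) +
        α * β * pd / (4 * α ^ 2 - β ^ 2)) := by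
  have hα : (0:ℝ) < α := hβ.trans hαβ
  have h2ab : (0:ℝ) < 2 * α - β := by linarith
  have h4 : (0:ℝ) < 4 * α ^ 2 - β ^ 2 := by nlinarith
  set Ed := ∑ θ', P θ' * D θ' with hEd
  have hEd0 : 0 ≤ Ed := Finset.sum_nonneg fun θ _ => mul_nonneg (hP θ) (hD θ)
  set T := ∑ θ, P θ * p₁ θ with hTdef
  have hT0 : 0 ≤ T := Finset.sum_nonneg fun θ _ => mul_nonneg (hP θ) (hp₁ θ)
  have hsum : ∀ q : ℝ, ∑ θ, P θ * (D θ - α * q + β * p₁ θ)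
      = Ed - α * q + β * T := by
    intro q
    have h : ∀ θ, P θ * (D θ - α * q + β * p₁ θ)
        = P θ * D θ + β * (P θ * p₁ θ) + (-(α * q)) * P θ := fun θ => by ring
    simp_rw [h]
    rw [Finset.sum_add_distrib, Finset.sum_add_distrib, ← Finset.mul_sum,
      ← Finset.mul_sum, ← hEd, ← hTdef, hPsum]
    ring
  constructor
  · rintro ⟨h1, h2⟩
    -- ISP₁ best response: p₁ θ = (D θ + β p₂ + α pd)/(2α)
    have hbr1 : ∀ θ, 2 * α * p₁ θ = D θ + β * p₂ + α * pd := by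
      intro θ
      set k := (D θ + β * p₂ + α * pd) / (2 * α) with hkdef
      have hknum : 0 ≤ D θ + β * p₂ + α * pd := by
        have := mul_nonneg hβ.le hp₂
        have := mul_nonneg hα.le hpd
        have := hD θ
        linarith
      have hk0 : 0 ≤ k := div_nonneg hknum (by linarith)
      have hk : 2 * α * k = D θ + β * p₂ + α * pd := by
        rw [hkdef]; field_simp
      have h := h1 θ k hk0
      have he : α * (p₁ θ - k) ^ 2 =
          (D θ - α * k + β * p₂) * (k - pd) -
          (D θ - α * p₁ θ + β * p₂) * (p₁ θ - pd) := by
        linear_combination (k - p₁ θ) * hk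
      have hsq : (p₁ θ - k) ^ 2 ≤ 0 := by nlinarith [sq_nonneg (p₁ θ - k)]
      have h0 : (p₁ θ - k) ^ 2 = 0 := le_antisymm hsq (sq_nonneg _)
      have hpk : p₁ θ = k := by
        have := pow_eq_zero_iff (n := 2) (by norm_num) |>.mp h0
        linarith
      rw [hpk, hk]
    -- ISP₂ best response: 2α p₂ = Ed + β T
    have hbr2 : 2 * α * p₂ = Ed + β * T := by
      set k := (Ed + β * T) / (2 * α) with hkdef
      have hknum : 0 ≤ Ed + β * T := by nlinarith [mul_nonneg hβ.le hT0]
      have hk0 : 0 ≤ k := div_nonneg hknum (by linarith)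
      have hk : 2 * α * k = Ed + β * T := by rw [hkdef]; field_simp
      have h := h2 k hk0
      rw [hsum, hsum] at h
      have he : α * (p₂ - k) ^ 2 =
          (Ed - α * k + β * T) * k - (Ed - α * p₂ + β * T) * p₂ := by
        linear_combination (k - p₂) * hk
      have hsq : (p₂ - k) ^ 2 ≤ 0 := by nlinarith [sq_nonneg (p₂ - k)]
      have h0 : (p₂ - k) ^ 2 = 0 := le_antisymm hsq (sq_nonneg _)
      have hpk : p₂ = k := by
        have := pow_eq_zero_iff (n := 2) (by norm_num) |>.mp h0
        linarith
      rw [hpk, hk]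
    -- compute T
    have hT : 2 * α * T = Ed + β * p₂ + α * pd := by
      calc 2 * α * T = ∑ θ, 2 * α * (P θ * p₁ θ) := by
            rw [hTdef, Finset.mul_sum]
        _ = ∑ θ, (P θ * D θ + (β * p₂ + α * pd) * P θ) :=
            Finset.sum_congr rfl fun θ _ => by linear_combination P θ * hbr1 θ
        _ = Ed + β * p₂ + α * pd := by
            rw [Finset.sum_add_distrib, ← Finset.mul_sum, ← hEd, hPsum]; ring
    have hkey : (4 * α ^ 2 - β ^ 2) * p₂ = (2 * α + β) * Ed + α * β * pd := by
      linear_combination 2 * α * hbr2 + β * hT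
    have hp2val : p₂ = Ed / (2 * α - β) + α * β * pd / (4 * α ^ 2 - β ^ 2) := by
      rw [div_add_div _ _ h2ab.ne' h4.ne', eq_div_iff (mul_ne_zero h2ab.ne' h4.ne')]
      linear_combination (2 * α - β) * hkey
    refine ⟨fun θ => ?_, hp2val⟩
    have hb : p₁ θ = (D θ + β * p₂ + α * pd) / (2 * α) := by
      rw [eq_div_iff (by positivity : (2 * α : ℝ) ≠ 0)]
      linear_combination hbr1 θ
    rw [hb, hp2val]
    rw [show (4 * α ^ 2 - β ^ 2) = (2 * α - β) * (2 * α + β) by ring]; field_simp [h2ab.ne', hα.ne', (by linarith : (2 * α + β) ≠ 0)]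
    ring
  · rintro ⟨h1, h2⟩
    have hk1 : ∀ θ, 2 * α * p₁ θ = D θ + β * p₂ + α * pd := by
      intro θ
      rw [h1 θ, h2]
      rw [show (4 * α ^ 2 - β ^ 2) = (2 * α - β) * (2 * α + β) by ring]; field_simp [h2ab.ne', hα.ne', (by linarith : (2 * α + β) ≠ 0)]
      ring
    have hT : 2 * α * T = Ed + β * p₂ + α * pd := by
      calc 2 * α * T = ∑ θ, 2 * α * (P θ * p₁ θ) := by
            rw [hTdef, Finset.mul_sum]
        _ = ∑ θ, (P θ * D θ + (β * p₂ + α * pd) * P θ) :=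
            Finset.sum_congr rfl fun θ _ => by linear_combination P θ * hk1 θ
        _ = Ed + β * p₂ + α * pd := by
            rw [Finset.sum_add_distrib, ← Finset.mul_sum, ← hEd, hPsum]; ring
    have h2' : (4 * α ^ 2 - β ^ 2) * p₂ = (2 * α + β) * Ed + α * β * pd := by
      rw [h2]; rw [show (4 * α ^ 2 - β ^ 2) = (2 * α - β) * (2 * α + β) by ring]; field_simp [h2ab.ne', (by linarith : (2 * α + β) ≠ 0)]
    have hbr2 : 2 * α * p₂ = Ed + β * T := by
      have hz : 2 * α * (2 * α * p₂ - (Ed + β * T)) = 2 * α * 0 := by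
        rw [mul_zero]
        linear_combination h2' - β * hT
      have := mul_left_cancel₀ (by positivity : (2 * α : ℝ) ≠ 0) hz
      linarith
    constructor
    · intro θ q hq
      have hk := hk1 θ
      have he : (D θ - α * p₁ θ + β * p₂) * (p₁ θ - pd) -
          (D θ - α * q + β * p₂) * (q - pd) = α * (p₁ θ - q) ^ 2 := by
        linear_combination (q - p₁ θ) * hk
      nlinarith [sq_nonneg (p₁ θ - q)]
    · intro q hq
      rw [hsum, hsum]
      have he : (Ed - α * p₂ + β * T) * p₂ - (Ed - α * q + β * T) * q
          = α * (p₂ - q) ^ 2 := by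
        linear_combination (q - p₂) * hbr2
      nlinarith [sq_nonneg (p₂ - q)]
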